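/- In dimension m = 2, the fractional Clifford–Fourier kernel has the closed form: for α ∈ (0,π), β ∈ R, and x, y ∈ R², e^{iβΓ_y}( e^{-i⟨x,y⟩/ sin α} ) = [ cos( t sin β / sin α ) + (x ∧ y) sin( t sin β / sin α ) / t ] · e^{-i ⟨x,y⟩ cos β / sin α}, where t = |x ∧ y| = √(|x|²|y|² − ⟨x,y⟩²) (and the second term is interpreted as (x∧y)(sin β / sin α) when t = 0). -/

import Mathlib

/-- Partial derivative `∂_{x_j}`. -/
noncomputable def pd {m : ℕ} {A : Type*} [NormedAddCommGroup A] [NormedSpace ℝ A]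
    (j : Fin m) (f : EuclideanSpace ℝ (Fin m) → A) (x : EuclideanSpace ℝ (Fin m)) : A :=
  fderiv ℝ f x (EuclideanSpace.single j 1)

/-- The Gamma operator `Γ = -∑_{j<k} e_j e_k (x_j ∂_{x_k} - x_k ∂_{x_j})`. -/
noncomputable def Gam {m : ℕ} {A : Type*} [NormedRing A] [NormedAlgebra ℂ A]
    (e : Fin m → A) (f : EuclideanSpace ℝ (Fin m) → A) (x : EuclideanSpace ℝ (Fin m)) : A :=
  -∑ j : Fin m, ∑ k : Fin m,
    if j < k then e j * e k * ((x j : ℝ) • pd k f x - (x k : ℝ) • pd j f x) else 0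

/-- `e^{iβΓ}` applied to a function, via the exponential series. -/
noncomputable def gamExp {m : ℕ} {A : Type*} [NormedRing A] [NormedAlgebra ℂ A]
    (e : Fin m → A) (β : ℝ) (f : EuclideanSpace ℝ (Fin m) → A)
    (y : EuclideanSpace ℝ (Fin m)) : A :=
  ∑' n : ℕ, ((Nat.factorial n : ℂ))⁻¹ •
    ((fun g z => (Complex.I * (β : ℂ)) • Gam e g z)^[n] f) y

noncomputable def Lop (g : EuclideanSpace ℝ (Fin 2) → ℂ) (z : EuclideanSpace ℝ (Fin 2)) : ℂ :=
  (z 0 : ℝ) • pd 1 g z - (z 1 : ℝ) • pd 0 g z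

lemma gam_eq {A : Type*} [NormedRing A] [NormedAlgebra ℂ A] (e : Fin 2 → A)
    (p : EuclideanSpace ℝ (Fin 2) → ℂ) (v : A) (z : EuclideanSpace ℝ (Fin 2))
    (hp : Differentiable ℝ p) :
    Gam e (fun w => p w • v) z = Lop p z • -(e 0 * e 1 * v) := by
  have hpd : ∀ k : Fin 2, pd k (fun w => p w • v) z = pd k p z • v := by
    intro k
    unfold pd
    rw [fderiv_smul_const (hp z) v, ContinuousLinearMap.smulRight_apply]
  unfold Gam
  simp only [Fin.sum_univ_two, hpd, show ¬((0:Fin 2) < 0) by decide, show (0:Fin 2) < 1 by decide,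
    show ¬((1:Fin 2) < 0) by decide, show ¬((1:Fin 2) < 1) by decide, if_true, if_false,
    zero_add, add_zero]
  rw [← smul_assoc, ← smul_assoc, ← sub_smul]
  rw [mul_smul_comm, Lop, smul_neg]

lemma lop_contDiff (g : EuclideanSpace ℝ (Fin 2) → ℂ) (hg : ContDiff ℝ ⊤ g) :
    ContDiff ℝ ⊤ (Lop g) := by
  have hfd : ContDiff ℝ ⊤ (fun z => fderiv ℝ g z) := hg.fderiv_right le_top
  have hc : ∀ i : Fin 2, ContDiff ℝ ⊤ (fun z : EuclideanSpace ℝ (Fin 2) => z i) := by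
    intro i
    exact (EuclideanSpace.proj i : EuclideanSpace ℝ (Fin 2) →L[ℝ] ℝ).contDiff
  have hpd : ∀ k : Fin 2, ContDiff ℝ ⊤ (fun z => pd k g z) := by
    intro k
    exact hfd.clm_apply contDiff_const
  exact ((hc 0).smul (hpd 1)).sub ((hc 1).smul (hpd 0))

noncomputable def rot (y : EuclideanSpace ℝ (Fin 2)) (θ : ℝ) : EuclideanSpace ℝ (Fin 2) :=
  (y 0 * Real.cos θ - y 1 * Real.sin θ) • EuclideanSpace.single 0 (1:ℝ) +
    (y 0 * Real.sin θ + y 1 * Real.cos θ) • EuclideanSpace.single 1 (1:ℝ)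

lemma rot_apply0 (y : EuclideanSpace ℝ (Fin 2)) (θ : ℝ) :
    rot y θ 0 = y 0 * Real.cos θ - y 1 * Real.sin θ := by
  simp [rot, EuclideanSpace.single_apply]

lemma rot_apply1 (y : EuclideanSpace ℝ (Fin 2)) (θ : ℝ) :
    rot y θ 1 = y 0 * Real.sin θ + y 1 * Real.cos θ := by
  simp [rot, EuclideanSpace.single_apply]

lemma rot_zero (y : EuclideanSpace ℝ (Fin 2)) : rot y 0 = y := by
  ext i
  fin_cases i
  · simpa using rot_apply0 y 0
  · simpa using rot_apply1 y 0

lemma hasDerivAt_comp_rot (g : EuclideanSpace ℝ (Fin 2) → ℂ) (hg : Differentiable ℝ g)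
    (y : EuclideanSpace ℝ (Fin 2)) (θ : ℝ) :
    HasDerivAt (fun t => g (rot y t)) (Lop g (rot y θ)) θ := by
  have hc : HasDerivAt (fun t => rot y t)
      ((-(rot y θ 1)) • EuclideanSpace.single 0 (1:ℝ) + (rot y θ 0) • EuclideanSpace.single 1 (1:ℝ)) θ := by
    have h0 : HasDerivAt (fun t : ℝ => (y 0 * Real.cos t - y 1 * Real.sin t))
        (-(rot y θ 1)) θ := by
      rw [rot_apply1]
      have := ((Real.hasDerivAt_cos θ).const_mul (y 0)).sub ((Real.hasDerivAt_sin θ).const_mul (y 1))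
      refine this.congr_deriv ?_
      ring
    have h1 : HasDerivAt (fun t : ℝ => (y 0 * Real.sin t + y 1 * Real.cos t))
        (rot y θ 0) θ := by
      rw [rot_apply0]
      have := ((Real.hasDerivAt_sin θ).const_mul (y 0)).add ((Real.hasDerivAt_cos θ).const_mul (y 1))
      refine this.congr_deriv ?_
      ring
    exact (h0.smul_const _).add (h1.smul_const _)
  have hgd := (hg (rot y θ)).hasFDerivAt
  have := hgd.comp_hasDerivAt θ hc
  refine this.congr_deriv (Eq.symm ?_)
  rw [map_add, map_smul, map_smul]
  unfold Lop pd
  module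

theorem aux_main {A : Type*} [NormedRing A] [NormedAlgebra ℂ A]
    [CompleteSpace A] (e : Fin 2 → A)
    (he : ∀ i j : Fin 2, e i * e j + e j * e i = if i = j then (-2 : ℂ) • (1 : A) else 0)
    (s β : ℝ) (x y : EuclideanSpace ℝ (Fin 2)) :
    gamExp e β (fun z => Complex.exp (-Complex.I *
        ((x 0 * z 0 + x 1 * z 1 : ℝ) : ℂ) / (s : ℂ)) • (1 : A)) y =
      (Complex.exp (-Complex.I * ((x 0 * y 0 + x 1 * y 1 : ℝ) : ℂ) * (Real.cos β : ℂ) / (s : ℂ))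
          * ((Real.cos ((x 0 * y 1 - x 1 * y 0) * Real.sin β / s) : ℝ) : ℂ)) • (1 : A)
        + (Complex.exp (-Complex.I * ((x 0 * y 0 + x 1 * y 1 : ℝ) : ℂ) * (Real.cos β : ℂ) / (s : ℂ))
          * ((Real.sin ((x 0 * y 1 - x 1 * y 0) * Real.sin β / s) : ℝ) : ℂ)) • (e 0 * e 1) := by
  classical
  set u : ℝ := x 0 * y 0 + x 1 * y 1 with hu
  set w : ℝ := x 0 * y 1 - x 1 * y 0 with hw
  set h : EuclideanSpace ℝ (Fin 2) → ℂ :=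
    fun z => Complex.exp (-Complex.I * ((x 0 * z 0 + x 1 * z 1 : ℝ) : ℂ) / (s : ℂ)) with hh
  set G : ℂ → ℂ := fun ζ =>
    Complex.exp (-Complex.I * ((u : ℂ) * Complex.cos ζ - (w : ℂ) * Complex.sin ζ) / (s : ℂ))
    with hG'
  set c : ℕ → ℂ := fun n => (((β : ℂ)) ^ n + (-(β : ℂ)) ^ n) / 2 with hc'
  set d : ℕ → ℂ := fun n => Complex.I * ((-(β : ℂ)) ^ n - (β : ℂ) ^ n) / 2 with hd'
  -- smoothness of h
  have hsmooth : ContDiff ℝ ⊤ h := by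
    have hlin : ContDiff ℝ ⊤ (fun z : EuclideanSpace ℝ (Fin 2) =>
        ((x 0 * z 0 + x 1 * z 1 : ℝ) : ℂ)) := by
      apply Complex.ofRealCLM.contDiff.comp
      exact (contDiff_const.mul
          (EuclideanSpace.proj (0 : Fin 2) : EuclideanSpace ℝ (Fin 2) →L[ℝ] ℝ).contDiff).add
        (contDiff_const.mul
          (EuclideanSpace.proj (1 : Fin 2) : EuclideanSpace ℝ (Fin 2) →L[ℝ] ℝ).contDiff)
    exact ((contDiff_const.mul hlin).div_const _).cexp
  have hsm : ∀ n, ContDiff ℝ ⊤ (Lop^[n] h) := by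
    intro n
    induction n with
    | zero => simpa using hsmooth
    | succ n ih => rw [Function.iterate_succ_apply']; exact lop_contDiff _ ih
  -- entire G
  have hG : Differentiable ℂ G := by
    apply Differentiable.cexp
    exact ((differentiable_const _).mul (((differentiable_const _).mul Complex.differentiable_cos).sub
      ((differentiable_const _).mul Complex.differentiable_sin))).div_const _
  have hGn : ∀ n, Differentiable ℂ (iteratedDeriv n G) := by
    intro n
    have hA : AnalyticOnNhd ℂ (deriv^[n] G) Set.univ :=
      (hG.differentiableOn.analyticOnNhd isOpen_univ).iterated_deriv n
    rw [iteratedDeriv_eq_iterate]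
    exact fun z => (hA z (Set.mem_univ z)).differentiableAt
  -- key identification
  have key : ∀ n, ∀ θ : ℝ, Lop^[n] h (rot y θ) = iteratedDeriv n G (θ : ℂ) := by
    intro n
    induction n with
    | zero =>
      intro θ
      simp only [Function.iterate_zero, id_eq, iteratedDeriv_zero, hh, hG']
      congr 1
      rw [rot_apply0, rot_apply1, ← Complex.ofReal_cos, ← Complex.ofReal_sin]
      push_cast [hu, hw]
      ring
    | succ n ih =>
      intro θ
      rw [Function.iterate_succ_apply', iteratedDeriv_succ]
      have h2 : HasDerivAt (fun t : ℝ => iteratedDeriv n G (t : ℂ))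
          (deriv (iteratedDeriv n G) (θ : ℂ)) θ := (((hGn n) (θ:ℂ)).hasDerivAt).comp_ofReal
      have hfe : (fun t : ℝ => Lop^[n] h (rot y t)) = fun t : ℝ => iteratedDeriv n G (t : ℂ) :=
        funext ih
      have h3 : HasDerivAt (fun t : ℝ => Lop^[n] h (rot y t))
          (deriv (iteratedDeriv n G) (θ : ℂ)) θ := by rw [hfe]; exact h2
      have h4 := hasDerivAt_comp_rot (Lop^[n] h) ((hsm n).differentiable (by simp)) y θ
      exact h4.unique h3
  have hD : ∀ n, Lop^[n] h y = iteratedDeriv n G 0 := by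
    intro n
    have := key n 0
    rwa [rot_zero, Complex.ofReal_zero] at this
  -- Clifford algebra facts
  have h00 : e 0 * e 0 = (-1 : ℂ) • (1 : A) := by
    have h1 := he 0 0
    rw [if_pos rfl] at h1
    have h2 : (2 : ℂ) • (e 0 * e 0) = (-2 : ℂ) • (1 : A) := by rw [two_smul]; exact h1
    calc e 0 * e 0 = (2 : ℂ)⁻¹ • ((2 : ℂ) • (e 0 * e 0)) := by rw [smul_smul]; norm_num
    _ = (2 : ℂ)⁻¹ • ((-2 : ℂ) • (1 : A)) := by rw [h2]
    _ = (-1 : ℂ) • (1 : A) := by rw [smul_smul]; norm_num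
  have h11 : e 1 * e 1 = (-1 : ℂ) • (1 : A) := by
    have h1 := he 1 1
    rw [if_pos rfl] at h1
    have h2 : (2 : ℂ) • (e 1 * e 1) = (-2 : ℂ) • (1 : A) := by rw [two_smul]; exact h1
    calc e 1 * e 1 = (2 : ℂ)⁻¹ • ((2 : ℂ) • (e 1 * e 1)) := by rw [smul_smul]; norm_num
    _ = (2 : ℂ)⁻¹ • ((-2 : ℂ) • (1 : A)) := by rw [h2]
    _ = (-1 : ℂ) • (1 : A) := by rw [smul_smul]; norm_num
  have h10 : e 1 * e 0 = -(e 0 * e 1) := by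
    have h1 := he 1 0
    rw [if_neg (by decide)] at h1
    exact eq_neg_of_add_eq_zero_left h1
  have EE : (e 0 * e 1) * (e 0 * e 1) = (-1 : ℂ) • (1 : A) := by
    calc (e 0 * e 1) * (e 0 * e 1) = e 0 * (e 1 * e 0) * e 1 := by
          simp only [mul_assoc]
    _ = -(e 0 * e 0 * (e 1 * e 1)) := by rw [h10]; simp only [mul_neg, neg_mul, mul_assoc]
    _ = (-1 : ℂ) • (1 : A) := by
          rw [h00, h11]
          simp [smul_smul]
  -- invariant for the iterates
  have inv : ∀ n, (fun (g : EuclideanSpace ℝ (Fin 2) → A) z =>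
        (Complex.I * (β : ℂ)) • Gam e g z)^[n] (fun z => h z • (1 : A)) =
      fun z => (Lop^[n] h) z • ((c n) • (1 : A) + (d n) • (e 0 * e 1)) := by
    intro n
    induction n with
    | zero =>
      funext z
      simp only [Function.iterate_zero, id_eq, hc', hd']
      norm_num
    | succ n ih =>
      rw [Function.iterate_succ_apply', ih]
      funext z
      rw [gam_eq e _ _ z ((hsm n).differentiable (by simp))]
      rw [Function.iterate_succ_apply']
      rw [smul_comm]
      congr 1
      have hcn : c (n + 1) = Complex.I * (β : ℂ) * d n := by
        simp only [hc', hd', pow_succ]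
        have : Complex.I * Complex.I = -1 := Complex.I_mul_I
        field_simp
        ring_nf
        rw [Complex.I_sq]
        ring
      have hdn : d (n + 1) = -(Complex.I * (β : ℂ) * c n) := by
        simp only [hc', hd', pow_succ]
        ring
      rw [hcn, hdn, mul_add, mul_smul_comm, mul_smul_comm, mul_one, EE]
      module
  -- Taylor series sums
  have Hp : HasSum (fun n => ((Nat.factorial n : ℂ))⁻¹ • ((β : ℂ)) ^ n • iteratedDeriv n G 0)
      (G (β : ℂ)) := by
    have := Complex.hasSum_taylorSeries_of_entire hG 0 (β : ℂ)
    simpa using this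
  have Hm : HasSum (fun n => ((Nat.factorial n : ℂ))⁻¹ • (-(β : ℂ)) ^ n • iteratedDeriv n G 0)
      (G (-(β : ℂ))) := by
    have := Complex.hasSum_taylorSeries_of_entire hG 0 (-(β : ℂ))
    simpa using this
  have Ha : HasSum (fun n => ((Nat.factorial n : ℂ))⁻¹ * iteratedDeriv n G 0 * c n)
      ((G ((β : ℂ)) + G (-(β : ℂ))) / 2) := by
    have hfun : (fun n => ((Nat.factorial n : ℂ))⁻¹ * iteratedDeriv n G 0 * c n) =
        fun n => (((Nat.factorial n : ℂ))⁻¹ • ((β : ℂ)) ^ n • iteratedDeriv n G 0 +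
          ((Nat.factorial n : ℂ))⁻¹ • (-(β : ℂ)) ^ n • iteratedDeriv n G 0) / 2 := by
      funext n
      simp only [smul_eq_mul, hc']
      ring
    rw [hfun]
    exact (Hp.add Hm).div_const 2
  have Hb : HasSum (fun n => ((Nat.factorial n : ℂ))⁻¹ * iteratedDeriv n G 0 * d n)
      (Complex.I * (G (-(β : ℂ)) - G ((β : ℂ))) / 2) := by
    have hfun : (fun n => ((Nat.factorial n : ℂ))⁻¹ * iteratedDeriv n G 0 * d n) =
        fun n => Complex.I * (((Nat.factorial n : ℂ))⁻¹ • (-(β : ℂ)) ^ n • iteratedDeriv n G 0 -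
          ((Nat.factorial n : ℂ))⁻¹ • ((β : ℂ)) ^ n • iteratedDeriv n G 0) / 2 := by
      funext n
      simp only [smul_eq_mul, hd']
      ring
    rw [hfun]
    have := ((Hm.sub Hp).mul_left Complex.I).div_const 2
    simpa [mul_div_assoc] using this
  have Hsum : HasSum (fun n => (((Nat.factorial n : ℂ))⁻¹ * iteratedDeriv n G 0 * c n) • (1 : A) +
        (((Nat.factorial n : ℂ))⁻¹ * iteratedDeriv n G 0 * d n) • (e 0 * e 1))
      (((G ((β : ℂ)) + G (-(β : ℂ))) / 2) • (1 : A) +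
        (Complex.I * (G (-(β : ℂ)) - G ((β : ℂ))) / 2) • (e 0 * e 1)) :=
    (Ha.smul_const _).add (Hb.smul_const _)
  have term_eq : ∀ n, ((Nat.factorial n : ℂ))⁻¹ •
      ((fun (g : EuclideanSpace ℝ (Fin 2) → A) z =>
        (Complex.I * (β : ℂ)) • Gam e g z)^[n] (fun z => h z • (1 : A))) y =
      (((Nat.factorial n : ℂ))⁻¹ * iteratedDeriv n G 0 * c n) • (1 : A) +
        (((Nat.factorial n : ℂ))⁻¹ * iteratedDeriv n G 0 * d n) • (e 0 * e 1) := by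
    intro n
    rw [inv n]
    simp only [hD n]
    rw [smul_add, smul_smul, smul_smul, smul_add, smul_smul, smul_smul]
    ring_nf
  -- assemble the tsum
  have hfb : (fun z => Complex.exp (-Complex.I *
      ((x 0 * z 0 + x 1 * z 1 : ℝ) : ℂ) / (s : ℂ)) • (1 : A)) = fun z => h z • (1 : A) := rfl
  rw [gamExp, hfb, tsum_congr term_eq, Hsum.tsum_eq]
  -- final trigonometric simplification
  have GB : G ((β : ℂ)) = Complex.exp (-Complex.I * (u : ℂ) * (Real.cos β : ℂ) / (s : ℂ)) *
      Complex.exp (Complex.I * ((w * Real.sin β / s : ℝ) : ℂ)) := by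
    rw [hG']
    simp only [← Complex.ofReal_cos, ← Complex.ofReal_sin]
    rw [← Complex.exp_add]
    congr 1
    push_cast
    ring
  have GmB : G (-(β : ℂ)) = Complex.exp (-Complex.I * (u : ℂ) * (Real.cos β : ℂ) / (s : ℂ)) *
      Complex.exp (-(Complex.I * ((w * Real.sin β / s : ℝ) : ℂ))) := by
    rw [hG', show (-(β : ℂ)) = ((-β : ℝ) : ℂ) by push_cast; ring]
    simp only [← Complex.ofReal_cos, ← Complex.ofReal_sin]
    rw [← Complex.exp_add]
    congr 1
    push_cast [Real.cos_neg, Real.sin_neg]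
    ring
  set τ : ℝ := w * Real.sin β / s with hτ
  set Ec : ℂ := Complex.exp (-Complex.I * (u : ℂ) * (Real.cos β : ℂ) / (s : ℂ)) with hEc
  have expIτ : Complex.exp (Complex.I * (τ : ℂ)) =
      Complex.cos (τ : ℂ) + Complex.sin (τ : ℂ) * Complex.I := by
    rw [mul_comm, Complex.exp_mul_I]
  have expmIτ : Complex.exp (-(Complex.I * (τ : ℂ))) =
      Complex.cos (τ : ℂ) - Complex.sin (τ : ℂ) * Complex.I := by
    rw [show -(Complex.I * (τ : ℂ)) = (-(τ : ℂ)) * Complex.I by ring, Complex.exp_mul_I,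
      Complex.cos_neg, Complex.sin_neg]
    ring
  have hSa : (G ((β : ℂ)) + G (-(β : ℂ))) / 2 = Ec * ((Real.cos τ : ℝ) : ℂ) := by
    rw [GB, GmB, expIτ, expmIτ, Complex.ofReal_cos]
    ring
  have hSb : Complex.I * (G (-(β : ℂ)) - G ((β : ℂ))) / 2 = Ec * ((Real.sin τ : ℝ) : ℂ) := by
    rw [GB, GmB, expIτ, expmIτ, Complex.ofReal_sin]
    linear_combination (-(Ec * Complex.sin (τ : ℂ))) * Complex.I_sq
  rw [hSa, hSb]

/-- closed form of the fractional Clifford–Fourier kernel in dimension 2: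
`e^{iβΓ_y}(e^{-i⟨x,y⟩/sin α}) = [cos(t sin β/sin α) + (x∧y) sin(t sin β/sin α)/t]
  e^{-i⟨x,y⟩ cos β/sin α}` with `t = |x∧y| = √(|x|²|y|² - ⟨x,y⟩²)` (the second coefficient
interpreted as `sin β / sin α` when `t = 0`). -/
theorem fracCFT_kernel_dim_two {A : Type*} [NormedRing A] [NormedAlgebra ℂ A]
    [CompleteSpace A] (e : Fin 2 → A)
    (he : ∀ i j : Fin 2, e i * e j + e j * e i = if i = j then (-2 : ℂ) • (1 : A) else 0)
    (α β : ℝ) (hα : α ∈ Set.Ioo 0 Real.pi) (x y : EuclideanSpace ℝ (Fin 2)) :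
    gamExp e β (fun z => Complex.exp (-Complex.I *
        ((x 0 * z 0 + x 1 * z 1 : ℝ) : ℂ) / (Real.sin α : ℂ)) • (1 : A)) y =
      Complex.exp (-Complex.I * ((x 0 * y 0 + x 1 * y 1 : ℝ) : ℂ) * (Real.cos β : ℂ) /
          (Real.sin α : ℂ)) •
        ((Real.cos (Real.sqrt ((x 0 ^ 2 + x 1 ^ 2) * (y 0 ^ 2 + y 1 ^ 2) -
              (x 0 * y 0 + x 1 * y 1) ^ 2) * Real.sin β / Real.sin α) : ℂ) • (1 : A) +
          (if Real.sqrt ((x 0 ^ 2 + x 1 ^ 2) * (y 0 ^ 2 + y 1 ^ 2) -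
                (x 0 * y 0 + x 1 * y 1) ^ 2) = 0 then
              ((Real.sin β / Real.sin α : ℝ) : ℂ)
            else ((Real.sin (Real.sqrt ((x 0 ^ 2 + x 1 ^ 2) * (y 0 ^ 2 + y 1 ^ 2) -
                  (x 0 * y 0 + x 1 * y 1) ^ 2) * Real.sin β / Real.sin α) /
                Real.sqrt ((x 0 ^ 2 + x 1 ^ 2) * (y 0 ^ 2 + y 1 ^ 2) -
                  (x 0 * y 0 + x 1 * y 1) ^ 2) : ℝ) : ℂ)) •
            ((x 0 * y 1 - x 1 * y 0 : ℝ) • (e 0 * e 1))) := by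
  rw [aux_main e he (Real.sin α) β x y]
  have ht : Real.sqrt ((x 0 ^ 2 + x 1 ^ 2) * (y 0 ^ 2 + y 1 ^ 2) -
      (x 0 * y 0 + x 1 * y 1) ^ 2) = |x 0 * y 1 - x 1 * y 0| := by
    rw [show (x 0 ^ 2 + x 1 ^ 2) * (y 0 ^ 2 + y 1 ^ 2) - (x 0 * y 0 + x 1 * y 1) ^ 2 =
      (x 0 * y 1 - x 1 * y 0) ^ 2 by ring]
    exact Real.sqrt_sq_eq_abs _
  rw [ht]
  set w : ℝ := x 0 * y 1 - x 1 * y 0 with hw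
  set τ : ℝ := w * Real.sin β / Real.sin α with hτ
  have hcos : Real.cos (|w| * Real.sin β / Real.sin α) = Real.cos τ := by
    rcases abs_cases w with ⟨h1, _⟩ | ⟨h1, _⟩
    · rw [h1]
    · rw [h1, show -w * Real.sin β / Real.sin α = -τ by rw [hτ]; ring, Real.cos_neg]
  have hrsmul : ∀ (r : ℝ) (a : A), r • a = ((r : ℂ)) • a := by
    intro r a
    rw [show ((r : ℂ)) = r • (1 : ℂ) by rw [Complex.real_smul, mul_one], smul_one_smul]
  have hsin : (if |w| = 0 then ((Real.sin β / Real.sin α : ℝ) : ℂ)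
      else ((Real.sin (|w| * Real.sin β / Real.sin α) / |w| : ℝ) : ℂ)) • (w • (e 0 * e 1)) =
      ((Real.sin τ : ℝ) : ℂ) • (e 0 * e 1) := by
    rw [hrsmul w, smul_smul]
    congr 1
    by_cases hw0 : w = 0
    · rw [if_pos (by rw [hw0, abs_zero]), hw0]
      simp [hτ, hw0]
    · rw [if_neg (by simpa using hw0), ← Complex.ofReal_mul]
      congr 1
      rcases abs_cases w with ⟨h1, _⟩ | ⟨h1, _⟩
      · rw [h1, hτ]
        field_simp
      · rw [h1, show -w * Real.sin β / Real.sin α = -τ by rw [hτ]; ring, Real.sin_neg]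
        rw [hτ]
        field_simp
  rw [hcos, hsin, smul_add, smul_smul, smul_smul, mul_comm (Complex.exp _) _, mul_comm (Complex.exp _) _]
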